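/- For 1 ≤ n ≤ q let L_n = det[(B_{i,j})_{1≤i,j≤n}] − (−1)^n, the determinant of the upper-left n×n submatrix of the matrix of indeterminates minus (−1)^n. Then the ideal of ℤ[B_{i,j}] generated by the polynomials 1 + C_{1,1}, 1 + C_{2,2}, …, 1 + C_{q,q} equals the ideal generated by L_1, L_2, …, L_q. -/

import Mathlib

open scoped BigOperators

/-- A finite sequence of positive integers is *admissible* if between any two
occurrences of a number `s` there is an entry greater than `s`. -/
def IsAdmissible (l : List ℕ) : Prop :=
  ∀ (l₁ l₂ l₃ : List ℕ) (s : ℕ), l = l₁ ++ s :: (l₂ ++ s :: l₃) → ∃ t ∈ l₂, s < t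

/-- `Dset n` is the set of admissible sequences all of whose entries lie in
`{1, …, n-1}` (including the empty sequence). -/
def Dset (n : ℕ) : Set (List ℕ) :=
  {l | IsAdmissible l ∧ ∀ x ∈ l, 1 ≤ x ∧ x < n}

/-- The product `B i i₁ * B i₁ i₂ * ⋯ * B i_c j` along a sequence `[i₁, …, i_c]`;
the empty sequence contributes `B i j`. -/
def pathProd {A : Type*} [Ring A] (B : ℕ → ℕ → A) (i j : ℕ) : List ℕ → A
  | [] => B i j
  | a :: l => B i a * pathProd B a j l

/-- `M i j = Σ_{(i₁,…,i_c) ∈ D_{min(i,j)}} B i i₁ ⋯ B i_c j`. -/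
noncomputable def Mpoly {A : Type*} [Ring A] (B : ℕ → ℕ → A) (i j : ℕ) : A :=
  ∑ᶠ l ∈ Dset (min i j), pathProd B i j l

/-- `C i j` for `i < j` sums `B i i₁ ⋯ B i_c j` over sequences with
`(i, i₁, …, i_c) ∈ D_j`; and `C n n = M n n`. -/
noncomputable def Cpoly {A : Type*} [Ring A] (B : ℕ → ℕ → A) (i j : ℕ) : A :=
  if i = j then Mpoly B i j
  else ∑ᶠ l ∈ {l : List ℕ | (i :: l) ∈ Dset j}, pathProd B i j l

/-- The generators `B_{i,j}` of the free noncommutative unital ℤ-algebra. -/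
noncomputable def Bgen : ℕ → ℕ → FreeAlgebra ℤ (ℕ × ℕ) :=
  fun i j => FreeAlgebra.ι ℤ (i, j)

/-- The commuting indeterminates `B_{i,j}` of the polynomial ring `ℤ[B_{i,j}]`. -/
noncomputable def Bcomm : ℕ → ℕ → MvPolynomial (ℕ × ℕ) ℤ :=
  fun i j => MvPolynomial.X (i, j)


lemma isAdmissible_nil : IsAdmissible [] := by
  intro l₁ l₂ l₃ s h
  exact absurd h (by simp)

lemma IsAdmissible.of_append_right {a b : List ℕ} (h : IsAdmissible (a ++ b)) :
    IsAdmissible b := by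
  intro l₁ l₂ l₃ s hb
  exact h (a ++ l₁) l₂ l₃ s (by rw [hb, List.append_assoc])

lemma IsAdmissible.of_append_left {a b : List ℕ} (h : IsAdmissible (a ++ b)) :
    IsAdmissible a := by
  intro l₁ l₂ l₃ s ha
  refine h l₁ l₂ (l₃ ++ b) s ?_
  rw [ha]; simp

/-- first-occurrence split -/
lemma exists_split_first {a : ℕ} {l : List ℕ} (h : a ∈ l) :
    ∃ u v, l = u ++ a :: v ∧ a ∉ u := by
  induction l with
  | nil => simp at h
  | cons x xs ih =>
    by_cases hx : x = a
    · subst hx; exact ⟨[], xs, rfl, by simp⟩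
    · have hm : a ∈ xs := by
        rcases List.mem_cons.mp h with h' | h'
        · exact absurd h'.symm hx
        · exact h'
      rcases ih hm with ⟨u, v, rfl, hu⟩
      refine ⟨x :: u, v, rfl, ?_⟩
      simp only [List.mem_cons, not_or]
      exact ⟨fun h' => hx h'.symm, hu⟩

lemma mem_Dset_lt {n : ℕ} {l : List ℕ} (hl : l ∈ Dset n) {x : ℕ} (hx : x ∈ l) : x < n :=
  (hl.2 x hx).2

lemma not_mem_of_mem_Dset {n : ℕ} {l : List ℕ} (hl : l ∈ Dset n) : n ∉ l :=
  fun h => lt_irrefl n (mem_Dset_lt hl h)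

/-- Decomposition of `Dset (n+1)`. -/
lemma Dset_succ_eq (n : ℕ) (hn : 1 ≤ n) :
    Dset (n + 1) = Dset n ∪ (fun p : List ℕ × List ℕ => p.1 ++ n :: p.2) ''
      ((Dset n) ×ˢ (Dset n)) := by
  ext l
  constructor
  · rintro ⟨hadm, hmem⟩
    by_cases hn' : n ∈ l
    · right
      rcases exists_split_first hn' with ⟨u, v, rfl, hu⟩
      have hv : n ∉ v := by
        intro hv
        rcases exists_split_first hv with ⟨p, w, rfl, -⟩
        rcases hadm u p w n rfl with ⟨t, ht, hlt⟩
        have : t < n + 1 := (hmem t (by simp [ht])).2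
        omega
      have hDu : u ∈ Dset n := by
        refine ⟨hadm.of_append_left, fun x hx => ?_⟩
        have h1 := hmem x (by simp [hx])
        have : x ≠ n := fun h => hu (h ▸ hx)
        omega
      have hDv : v ∈ Dset n := by
        refine ⟨?_, fun x hx => ?_⟩
        · have : IsAdmissible ((u ++ [n]) ++ v) := by simpa using hadm
          exact this.of_append_right
        · have h1 := hmem x (by simp [hx])
          have : x ≠ n := fun h => hv (h ▸ hx)
          omega
      exact ⟨(u, v), ⟨hDu, hDv⟩, rfl⟩
    · left
      refine ⟨hadm, fun x hx => ?_⟩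
      have h1 := hmem x hx
      have : x ≠ n := fun h => hn' (h ▸ hx)
      omega
  · rintro (⟨hadm, hmem⟩ | ⟨⟨u, v⟩, ⟨hu, hv⟩, rfl⟩)
    · exact ⟨hadm, fun x hx => by have := hmem x hx; omega⟩
    · dsimp only at hu hv ⊢
      constructor
      · -- admissibility of u ++ n :: v
        intro l₁ l₂ l₃ s heq
        rcases List.append_eq_append_iff.mp heq with ⟨a', ha1, ha2⟩ | ⟨c', hc1, hc2⟩
        · -- l₁ = u ++ a', n :: v = a' ++ s :: l₂ ++ s :: l₃
          cases a' with
          | nil =>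
            simp only [List.nil_append] at ha2
            obtain ⟨rfl, hv'⟩ : n = s ∧ v = l₂ ++ s :: l₃ := by
              injection ha2 with h1 h2; exact ⟨h1, h2⟩
            exact absurd (by simp [hv'] : n ∈ v) (not_mem_of_mem_Dset hv)
          | cons x a'' =>
            simp only [List.cons_append] at ha2
            obtain ⟨rfl, hv'⟩ : n = x ∧ v = a'' ++ s :: (l₂ ++ s :: l₃) := by
              injection ha2 with h1 h2; exact ⟨h1, h2⟩
            exact hv.1 a'' l₂ l₃ s hv'
        · -- u = l₁ ++ c', c' ++ n :: v = s :: l₂ ++ s :: l₃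
          have hc2' : c' ++ n :: v = (s :: l₂) ++ s :: l₃ := by simpa using hc2.symm
          rcases List.append_eq_append_iff.mp hc2' with ⟨w, hw1, hw2⟩ | ⟨w, hw1, hw2⟩
          · -- s :: l₂ = c' ++ w, n :: v = w ++ s :: l₃
            cases w with
            | nil =>
              simp only [List.nil_append] at hw2
              have h1 : n = s := by injection hw2
              have hc : c' = s :: l₂ := by simpa using hw1.symm
              have hsu : n ∈ u := by rw [hc1, hc, h1]; simp
              exact absurd hsu (not_mem_of_mem_Dset hu)
            | cons x w' =>
              obtain ⟨h1, h2⟩ : n = x ∧ v = w' ++ s :: l₃ := by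
                simp only [List.cons_append] at hw2
                injection hw2 with h1 h2; exact ⟨h1, h2⟩
              subst h1
              -- n ∈ l₂ : s :: l₂ = c' ++ n :: w'
              cases c' with
              | nil =>
                simp only [List.nil_append] at hw1
                have h3 : s = n := by injection hw1
                have : n ∈ v := by rw [h2, h3]; simp
                exact absurd this (not_mem_of_mem_Dset hv)
              | cons y c'' =>
                obtain ⟨h3, hl₂⟩ : s = y ∧ l₂ = c'' ++ n :: w' := by
                  simp only [List.cons_append] at hw1
                  injection hw1 with h1 h2; exact ⟨h1, h2⟩
                refine ⟨n, by simp [hl₂], ?_⟩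
                have hsu : s ∈ u := by rw [hc1, h3]; simp
                exact mem_Dset_lt hu hsu
          · -- c' = s :: l₂ ++ w, s :: l₃ = w ++ n :: v
            cases w with
            | nil =>
              simp only [List.nil_append] at hw2
              have h1 : s = n := by injection hw2
              have hsu : n ∈ u := by rw [hc1, hw1, h1]; simp
              exact absurd hsu (not_mem_of_mem_Dset hu)
            | cons x w'' =>
              obtain ⟨h1, hl₃⟩ : s = x ∧ l₃ = w'' ++ n :: v := by
                simp only [List.cons_append] at hw2
                injection hw2 with h1 h2; exact ⟨h1, h2⟩
              -- u contains s :: l₂ ++ s :: w''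
              have : u = l₁ ++ s :: (l₂ ++ s :: w'') := by
                rw [hc1, hw1]; simp [← h1]
              exact hu.1 l₁ l₂ w'' s this
      · intro x hx
        simp only [List.mem_append, List.mem_cons] at hx
        rcases hx with h | rfl | h
        · have := hu.2 x h; omega
        · omega
        · have := hv.2 x h; omega

-- continuation: finiteness and finsum recursion
lemma Dset_zero : Dset 0 = {[]} := by
  ext l
  simp only [Set.mem_singleton_iff, Dset, Set.mem_setOf_eq]
  constructor
  · rintro ⟨-, h⟩
    cases l with
    | nil => rfl
    | cons x xs => exact absurd (h x (by simp)) (by omega)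
  · rintro rfl
    exact ⟨isAdmissible_nil, by simp⟩

lemma Dset_one : Dset 1 = {[]} := by
  ext l
  simp only [Set.mem_singleton_iff, Dset, Set.mem_setOf_eq]
  constructor
  · rintro ⟨-, h⟩
    cases l with
    | nil => rfl
    | cons x xs => exact absurd (h x (by simp)) (by omega)
  · rintro rfl
    exact ⟨isAdmissible_nil, by simp⟩

lemma Dset_finite (n : ℕ) : (Dset n).Finite := by
  induction n with
  | zero => rw [Dset_zero]; exact Set.finite_singleton _
  | succ n ih =>
    rcases Nat.eq_zero_or_pos n with rfl | hn
    · rw [Dset_one]; exact Set.finite_singleton _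
    · rw [Dset_succ_eq n hn]
      exact ih.union (Set.Finite.image _ (ih.prod ih))

lemma pathProd_append {A : Type*} [Ring A] (B : ℕ → ℕ → A) (i j a : ℕ) (u v : List ℕ) :
    pathProd B i j (u ++ a :: v) = pathProd B i a u * pathProd B a j v := by
  induction u generalizing i with
  | nil => rfl
  | cons x xs ih => simp only [List.cons_append, pathProd, List.append_eq, ih, mul_assoc]

lemma append_cons_inj {n : ℕ} :
    ∀ u₁ u₂ v₁ v₂ : List ℕ, n ∉ u₁ → n ∉ u₂ → u₁ ++ n :: v₁ = u₂ ++ n :: v₂ →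
      u₁ = u₂ ∧ v₁ = v₂ := by
  intro u₁
  induction u₁ with
  | nil =>
    intro u₂ v₁ v₂ _ hn₂ h
    cases u₂ with
    | nil => simpa using h
    | cons y ys =>
      simp only [List.nil_append, List.cons_append] at h
      have : n = y := by injection h
      exact absurd (this ▸ (List.mem_cons_self : y ∈ y :: ys)) hn₂
  | cons x xs ih =>
    intro u₂ v₁ v₂ hn₁ hn₂ h
    cases u₂ with
    | nil =>
      simp only [List.nil_append, List.cons_append] at h
      have : x = n := by injection h
      exact absurd (this ▸ (List.mem_cons_self : x ∈ x :: xs)) hn₁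
    | cons y ys =>
      simp only [List.cons_append] at h
      have h1 : x = y := by injection h
      have h2 : xs ++ n :: v₁ = ys ++ n :: v₂ := by injection h
      have := ih ys v₁ v₂ (fun hm => hn₁ (List.mem_cons_of_mem _ hm))
        (fun hm => hn₂ (List.mem_cons_of_mem _ hm)) h2
      simp_all

lemma glue_injOn (n : ℕ) :
    Set.InjOn (fun p : List ℕ × List ℕ => p.1 ++ n :: p.2) ((Dset n) ×ˢ (Dset n)) := by
  rintro ⟨u₁, v₁⟩ ⟨hu₁, hv₁⟩ ⟨u₂, v₂⟩ ⟨hu₂, hv₂⟩ h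
  dsimp only at h hu₁ hv₁ hu₂ hv₂
  have := append_cons_inj u₁ u₂ v₁ v₂ (not_mem_of_mem_Dset hu₁) (not_mem_of_mem_Dset hu₂) h
  simp [Prod.ext_iff, this.1, this.2]

/-- `Rf B k` is the matrix of path sums with intermediate entries ≤ k. -/
def Rf {A : Type*} [Ring A] (B : ℕ → ℕ → A) : ℕ → ℕ → ℕ → A
  | 0 => B
  | (k+1) => fun i j => Rf B k i j + Rf B k i (k+1) * Rf B k (k+1) j

lemma finsum_Dset_eq_Rf {A : Type*} [Ring A] (B : ℕ → ℕ → A) (n i j : ℕ) :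
    ∑ᶠ l ∈ Dset (n + 1), pathProd B i j l = Rf B n i j := by
  induction n generalizing i j with
  | zero => rw [Dset_one, finsum_mem_singleton]; rfl
  | succ n ih =>
    rw [Dset_succ_eq (n+1) (by omega)]
    have hfin := Dset_finite (n+1)
    have himg : ((fun p : List ℕ × List ℕ => p.1 ++ (n+1) :: p.2) ''
        ((Dset (n+1)) ×ˢ (Dset (n+1)))).Finite := (hfin.prod hfin).image _
    have hdisj : Disjoint (Dset (n+1)) ((fun p : List ℕ × List ℕ => p.1 ++ (n+1) :: p.2) ''
        ((Dset (n+1)) ×ˢ (Dset (n+1)))) := by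
      rw [Set.disjoint_left]
      rintro l hl ⟨⟨u, v⟩, -, rfl⟩
      exact not_mem_of_mem_Dset hl (by simp)
    rw [finsum_mem_union hdisj hfin himg, ih]
    congr 1
    -- sum over the image
    rw [finsum_mem_image (glue_injOn (n+1))]
    -- now finsum over product set
    have hps : ((Dset (n+1)) ×ˢ (Dset (n+1))).Finite := hfin.prod hfin
    rw [finsum_mem_eq_finite_toFinset_sum _ hps]
    rw [← ih i (n+1), ← ih (n+1) j,
      finsum_mem_eq_finite_toFinset_sum _ hfin, finsum_mem_eq_finite_toFinset_sum _ hfin]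
    rw [Finset.sum_mul_sum]
    have : hps.toFinset = hfin.toFinset ×ˢ hfin.toFinset := by
      ext ⟨u, v⟩; simp
    rw [this, Finset.sum_product]
    refine Finset.sum_congr rfl fun u _ => Finset.sum_congr rfl fun v _ => ?_
    exact pathProd_append B i j (n+1) u v

section MatrixKey
variable {R : Type*} [CommRing R]

open Matrix

lemma det_key (m : ℕ) (A : Matrix (Fin (m+1)) (Fin (m+1)) R) :
    A.det + (Matrix.of fun i j : Fin m =>
        A i.succ j.succ + A i.succ 0 * A 0 j.succ).det
      = (1 + A 0 0) * (A.submatrix Fin.succ Fin.succ).det := by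
  set D : Matrix (Fin m) (Fin m) R := A.submatrix Fin.succ Fin.succ with hD
  set u : Fin m → R := fun i => A i.succ 0 with hu
  set v : Fin m → R := fun j => A 0 j.succ with hv
  set e : Fin 1 ⊕ Fin m ≃ Fin (m+1) := finSumFinEquiv.trans (finCongr (Nat.add_comm 1 m))
    with he
  have he0 : e (Sum.inl 0) = 0 := by
    apply Fin.ext; simp [he]
  have heS : ∀ i : Fin m, e (Sum.inr i) = i.succ := by
    intro i; apply Fin.ext; simp [he, Nat.add_comm]
  set M : Matrix (Fin 1 ⊕ Fin m) (Fin 1 ⊕ Fin m) R :=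
    fromBlocks (Matrix.of fun _ _ : Fin 1 => A 0 0)
      (Matrix.of fun _ j => v j) (Matrix.of fun i _ => u i) D with hM
  have hA : A.submatrix e e = M := by
    ext i j
    cases i with
    | inl i =>
      have hi : i = 0 := Subsingleton.elim _ _
      cases j with
      | inl j =>
        have hj : j = 0 := Subsingleton.elim _ _
        simp [hi, hj, he0, hM, fromBlocks]
      | inr j => simp [hi, he0, heS, hM, fromBlocks, hv]
    | inr i =>
      cases j with
      | inl j =>
        have hj : j = 0 := Subsingleton.elim _ _
        simp [hj, he0, heS, hM, fromBlocks, hu]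
      | inr j => simp [he0, heS, hM, fromBlocks, hD]
  have hdetA : A.det = M.det := by
    rw [← hA, Matrix.det_submatrix_equiv_self]
  have hdet2 : (Matrix.of fun i j : Fin m =>
      A i.succ j.succ + A i.succ 0 * A 0 j.succ).det
      = (fromBlocks (1 : Matrix (Fin 1) (Fin 1) R)
          (Matrix.of fun _ j => -v j) (Matrix.of fun i _ => u i) D).det := by
    rw [Matrix.det_fromBlocks_one₁₁]
    congr 1
    ext i j
    simp only [Matrix.sub_apply, Matrix.mul_apply, Fin.sum_univ_one, Matrix.of_apply,
      Matrix.submatrix_apply, hD, hu, hv]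
    ring
  have h1 : M = M.updateRow (Sum.inl 0) (Sum.elim (fun _ => A 0 0) v) := by
    ext i j
    rcases i with i | i
    · have : i = 0 := Subsingleton.elim _ _
      subst this
      rcases j with j | j <;> simp [hM, fromBlocks]
    · rw [Matrix.updateRow_ne (by simp)]
  have h2 : fromBlocks (1 : Matrix (Fin 1) (Fin 1) R)
      (Matrix.of fun _ j => -v j) (Matrix.of fun i _ => u i) D
      = M.updateRow (Sum.inl 0) (Sum.elim (fun _ => 1) (fun j => -v j)) := by
    ext i j
    rcases i with i | i
    · have : i = 0 := Subsingleton.elim _ _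
      subst this
      rcases j with j | j
      · have : j = 0 := Subsingleton.elim _ _
        subst this
        simp [fromBlocks]
      · simp [fromBlocks]
    · rw [Matrix.updateRow_ne (by simp)]
      rcases j with j | j <;> simp [hM, fromBlocks]
  rw [hdetA, hdet2, h2]
  nth_rewrite 1 [h1]
  rw [← Matrix.det_updateRow_add]
  have h3 : (Sum.elim (fun _ : Fin 1 => A 0 0) v + Sum.elim (fun _ => 1) fun j => -v j)
      = Sum.elim (fun _ => A 0 0 + 1) 0 := by
    ext (i | i) <;> simp
  rw [h3]
  have h4 : M.updateRow (Sum.inl 0) (Sum.elim (fun _ => A 0 0 + 1) 0)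
      = fromBlocks (Matrix.of fun _ _ : Fin 1 => A 0 0 + 1) 0
          (Matrix.of fun i _ => u i) D := by
    ext i j
    rcases i with i | i
    · have : i = 0 := Subsingleton.elim _ _
      subst this
      rcases j with j | j <;> simp [fromBlocks]
    · rw [Matrix.updateRow_ne (by simp)]
      rcases j with j | j <;> simp [hM, fromBlocks]
  rw [h4, Matrix.det_fromBlocks_zero₁₂]
  congr 1
  rw [Matrix.det_fin_one]
  simp [add_comm]

end MatrixKey

section Telescope
variable {R : Type*} [CommRing R] (B : ℕ → ℕ → R)

lemma det_Rf_expansion : ∀ m t : ℕ, ∃ c : ℕ → R,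
    (Matrix.of fun i j : Fin m => Rf B t (t+1+(i:ℕ)) (t+1+(j:ℕ))).det
      = (∑ j ∈ Finset.range m, c j * (1 + Rf B (t+j) (t+j+1) (t+j+1))) + (-1)^m
    ∧ (1 ≤ m → c (m-1) = (-1 : R)^(m-1)) := by
  intro m
  induction m with
  | zero =>
    intro t
    refine ⟨0, ?_, by omega⟩
    simp [Matrix.det_fin_zero]
  | succ m ih =>
    intro t
    obtain ⟨c', hc', hlast⟩ := ih (t+1)
    set A : Matrix (Fin (m+1)) (Fin (m+1)) R :=
      Matrix.of fun i j : Fin (m+1) => Rf B t (t+1+(i:ℕ)) (t+1+(j:ℕ)) with hA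
    set d : R := (A.submatrix Fin.succ Fin.succ).det with hd
    have hkey := det_key m A
    have hmat : (Matrix.of fun i j : Fin m =>
        A i.succ j.succ + A i.succ 0 * A 0 j.succ)
        = Matrix.of fun i j : Fin m => Rf B (t+1) (t+1+1+(i:ℕ)) (t+1+1+(j:ℕ)) := by
      ext i j
      simp only [Matrix.of_apply, hA, Fin.val_succ, Fin.val_zero, Nat.add_zero]
      rw [show t+1+((i:ℕ)+1) = t+2+(i:ℕ) from by omega,
        show t+1+((j:ℕ)+1) = t+2+(j:ℕ) from by omega,
        show t+1+1+(i:ℕ) = t+2+(i:ℕ) from by omega,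
        show t+1+1+(j:ℕ) = t+2+(j:ℕ) from by omega]
      show _ = Rf B t (t+2+(i:ℕ)) (t+2+(j:ℕ))
        + Rf B t (t+2+(i:ℕ)) (t+1) * Rf B t (t+1) (t+2+(j:ℕ))
      rfl
    have hA00 : A 0 0 = Rf B t (t+1) (t+1) := by
      simp [hA]
    rw [hmat, hc', hA00] at hkey
    -- hkey : A.det + (S' + (-1)^m) = (1 + Rf B t (t+1) (t+1)) * d
    refine ⟨fun j => if j = 0 then d else -c' (j-1), ?_, ?_⟩
    · rw [Finset.sum_range_succ']
      simp only [if_pos rfl]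
      have hsum : (∑ j ∈ Finset.range m,
          (if j + 1 = 0 then d else -c' (j+1-1)) * (1 + Rf B (t+(j+1)) (t+(j+1)+1) (t+(j+1)+1)))
          = -∑ j ∈ Finset.range m, c' j * (1 + Rf B (t+1+j) (t+1+j+1) (t+1+j+1)) := by
        rw [← Finset.sum_neg_distrib]
        refine Finset.sum_congr rfl fun j _ => ?_
        rw [show t+(j+1) = t+1+j from by omega]
        simp [neg_mul]
      rw [hsum]
      have : A.det = (1 + Rf B t (t+1) (t+1)) * d
          - ((∑ j ∈ Finset.range m, c' j * (1 + Rf B (t+1+j) (t+1+j+1) (t+1+j+1))) + (-1)^m) := by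
        linear_combination hkey
      rw [this]
      simp only [Nat.add_zero]
      norm_num
      ring
    · intro _
      dsimp only
      rcases Nat.eq_zero_or_pos m with rfl | hm
      · simp only [Nat.zero_add, Nat.sub_self, if_pos rfl, hd, pow_zero]
        have : (A.submatrix Fin.succ Fin.succ).det = (1 : R) := Matrix.det_fin_zero
        rw [this]
        simp
      · have h1 : m + 1 - 1 = m := by omega
        rw [h1, if_neg (by omega), hlast hm]
        have hpow : (-1:R)^m = -(-1:R)^(m-1) := by
          conv_lhs => rw [show m = (m-1)+1 from by omega]
          rw [pow_succ]; ring
        rw [hpow]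

end Telescope

lemma Cpoly_succ {A : Type*} [Ring A] (B : ℕ → ℕ → A) (k : ℕ) :
    Cpoly B (k+1) (k+1) = Rf B k (k+1) (k+1) := by
  rw [Cpoly, if_pos rfl, Mpoly, Nat.min_self]
  exact finsum_Dset_eq_Rf B k (k+1) (k+1)

/-- the ideal of `ℤ[B_{i,j}]` generated by `1 + C_{1,1}, …, 1 + C_{q,q}`
equals the ideal generated by `L_n = det[(B_{i,j})_{1≤i,j≤n}] − (−1)^n`, `n = 1, …, q`. -/
theorem ideal_C_eq_ideal_det (q : ℕ) (hq : 1 ≤ q) :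
    Ideal.span ((fun n : ℕ => 1 + Cpoly Bcomm n n) '' Set.Icc 1 q) =
    Ideal.span ((fun n : ℕ =>
      (Matrix.of fun i j : Fin n => Bcomm ((i : ℕ) + 1) ((j : ℕ) + 1)).det - (-1) ^ n) ''
        Set.Icc 1 q) := by
  classical
  set A := MvPolynomial (ℕ × ℕ) ℤ
  have key : ∀ n : ℕ, 1 ≤ n → ∃ c : ℕ → A,
      ((Matrix.of fun i j : Fin n => Bcomm ((i:ℕ)+1) ((j:ℕ)+1)).det - (-1)^n
        = ∑ j ∈ Finset.range n, c j * (1 + Cpoly Bcomm (j+1) (j+1)))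
      ∧ c (n-1) = (-1 : A)^(n-1) := by
    intro n hn
    obtain ⟨c, hc, hlast⟩ := det_Rf_expansion Bcomm n 0
    have hmat : (Matrix.of fun i j : Fin n => Rf Bcomm 0 (0+1+(i:ℕ)) (0+1+(j:ℕ)))
        = Matrix.of fun i j : Fin n => Bcomm ((i:ℕ)+1) ((j:ℕ)+1) := by
      ext i j
      simp only [Matrix.of_apply]
      rw [show 0+1+(i:ℕ) = (i:ℕ)+1 from by omega, show 0+1+(j:ℕ) = (j:ℕ)+1 from by omega]
      rfl
    rw [hmat] at hc
    refine ⟨c, ?_, hlast hn⟩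
    rw [hc, add_sub_cancel_right]
    exact Finset.sum_congr rfl fun j _ => by rw [Nat.zero_add, Cpoly_succ Bcomm j]
  set SL : Set A := ((fun n : ℕ =>
      (Matrix.of fun i j : Fin n => Bcomm ((i : ℕ) + 1) ((j : ℕ) + 1)).det - (-1) ^ n) ''
        Set.Icc 1 q) with hSL
  set SC : Set A := ((fun n : ℕ => 1 + Cpoly Bcomm n n) '' Set.Icc 1 q) with hSC
  have hC : ∀ n : ℕ, n ≤ q → 1 ≤ n → 1 + Cpoly Bcomm n n ∈ Ideal.span SL := by
    intro n
    induction n using Nat.strong_induction_on with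
    | _ n ih =>
      intro hnq hn1
      obtain ⟨m, rfl⟩ : ∃ m, n = m + 1 := ⟨n - 1, by omega⟩
      obtain ⟨c, hc, hlast⟩ := key (m+1) (by omega)
      rw [Finset.sum_range_succ] at hc
      have hl : c m = (-1 : A)^m := by simpa using hlast
      rw [hl] at hc
      have hmem1 : (Matrix.of fun i j : Fin (m+1) =>
          Bcomm ((i:ℕ)+1) ((j:ℕ)+1)).det - (-1)^(m+1) ∈ Ideal.span SL :=
        Ideal.subset_span ⟨m+1, Set.mem_Icc.mpr ⟨by omega, by omega⟩, rfl⟩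
      have hmem2 : ∑ j ∈ Finset.range m, c j * (1 + Cpoly Bcomm (j+1) (j+1))
          ∈ Ideal.span SL := by
        refine Ideal.sum_mem _ fun j hj => Ideal.mul_mem_left _ _ ?_
        have hj' := Finset.mem_range.mp hj
        exact ih (j+1) (by omega) (by omega) (by omega)
      have hsq : (-1 : A)^m * (-1 : A)^m = 1 := by
        rw [← mul_pow]; norm_num
      have heq : 1 + Cpoly Bcomm (m+1) (m+1)
          = (-1 : A)^m * ((((Matrix.of fun i j : Fin (m+1) =>
              Bcomm ((i:ℕ)+1) ((j:ℕ)+1)).det - (-1)^(m+1))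
            - ∑ j ∈ Finset.range m, c j * (1 + Cpoly Bcomm (j+1) (j+1)))) := by
        linear_combination (-((-1 : A)^m)) * hc - (1 + Cpoly Bcomm (m+1) (m+1)) * hsq
      rw [heq]
      exact Ideal.mul_mem_left _ _ (Ideal.sub_mem _ hmem1 hmem2)
  apply le_antisymm
  · rw [Ideal.span_le]
    rintro x ⟨n, hn, rfl⟩
    rcases Set.mem_Icc.mp hn with ⟨h1, h2⟩
    exact hC n h2 h1
  · rw [Ideal.span_le]
    rintro x ⟨n, hn, rfl⟩
    rcases Set.mem_Icc.mp hn with ⟨h1, h2⟩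
    obtain ⟨c, hc, -⟩ := key n h1
    show (Matrix.of fun i j : Fin n => Bcomm ((i:ℕ)+1) ((j:ℕ)+1)).det - (-1)^n
      ∈ Ideal.span SC
    rw [hc]
    refine Ideal.sum_mem _ fun j hj => Ideal.mul_mem_left _ _ ?_
    have hj' := Finset.mem_range.mp hj
    exact Ideal.subset_span ⟨j+1, Set.mem_Icc.mpr ⟨by omega, by omega⟩, rfl⟩
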